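/- arXiv:1909.13357 — 2 statements merged into one kernel-verified Lean document; each statement's English description precedes it below -/
import Mathlib

section
/- For the fundamental system Y₁, Y₂ of −y″ + qy = ρ²y on [0, b_N] with asymptotics Y_j^{(ν)}(x, ρ) = (±iρ)^ν e^{±iρx}(1 + O(1/ρ)), the matrix B built from the jump and boundary data satisfies det B = (Y₂′(0,ρ)Y₁(0,ρ) − Y₁′(0,ρ)Y₂(0,ρ))^N = (−2iρ)^N (1 + O(1/ρ)) as ρ → ∞, Im ρ ≥ 0. -/
theorem aux_pow_sub_pow (a b : ℂ) (M : ℝ) (hM : ‖a‖ ≤ M) (hMb : ‖b‖ ≤ M) :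
    ∀ n : ℕ, ‖a ^ (n+1) - b ^ (n+1)‖ ≤ (n+1) * M ^ n * ‖a - b‖ := by
  intro n
  induction n with
  | zero => simp
  | succ n ih =>
    have hM0 : 0 ≤ M := le_trans (norm_nonneg a) hM
    have key : a ^ (n+2) - b ^ (n+2) = a ^ (n+1) * (a - b) + (a ^ (n+1) - b ^ (n+1)) * b := by
      ring
    calc ‖a ^ (n+2) - b ^ (n+2)‖
        ≤ ‖a ^ (n+1) * (a - b)‖ + ‖(a ^ (n+1) - b ^ (n+1)) * b‖ := by
          rw [key]; exact norm_add_le _ _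
      _ ≤ M ^ (n+1) * ‖a - b‖ + ((n+1) * M ^ n * ‖a - b‖) * M := by
          gcongr
          · rw [norm_mul, norm_pow]; gcongr
          · rw [norm_mul]; gcongr
      _ = (↑(n+1) + 1) * M ^ (n+1) * ‖a - b‖ := by push_cast; ring


open Complex in
/-- For the Birkhoff fundamental system `Y₁, Y₂` of `-y'' + q y = ρ² y` on `[0, b_N]` with
`Y_j^{(ν)}(x,ρ) = (±iρ)^ν e^{±iρx}(1 + O(1/ρ))` (uniformly, `Im ρ ≥ 0`), the determinant of the
matrix `B` built from the data `r_{kν} = -Y₁^{(ν-1)}(a_k, ρ)`, `s_{kν} = -Y₂^{(ν-1)}(a_k, ρ)`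
satisfies `det B = (Y₂′(0,ρ)Y₁(0,ρ) - Y₁′(0,ρ)Y₂(0,ρ))^N = (-2iρ)^N (1 + O(1/ρ))` as
`ρ → ∞`, `Im ρ ≥ 0`. -/
theorem stmt10 (N : ℕ) (hN : 1 ≤ N) (bN : ℝ) (hbN : 0 < bN)
    (a : ℕ → ℝ) (ha0 : a 0 = 0) (ha : ∀ k < N, a k ∈ Set.Icc 0 bN)
    (q : ℝ → ℂ) (hq : ContinuousOn q (Set.Icc 0 bN))
    (Y1 Y1' Y2 Y2' : ℂ → ℝ → ℂ)
    (hode : ∀ ρ : ℂ, 0 ≤ ρ.im → ∀ x ∈ Set.Icc 0 bN,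
      HasDerivWithinAt (Y1 ρ) (Y1' ρ x) (Set.Icc 0 bN) x ∧
      HasDerivWithinAt (Y1' ρ) ((q x - ρ ^ 2) * Y1 ρ x) (Set.Icc 0 bN) x ∧
      HasDerivWithinAt (Y2 ρ) (Y2' ρ x) (Set.Icc 0 bN) x ∧
      HasDerivWithinAt (Y2' ρ) ((q x - ρ ^ 2) * Y2 ρ x) (Set.Icc 0 bN) x)
    (hasym : ∃ C R : ℝ, 0 < C ∧ 0 < R ∧ ∀ ρ : ℂ, 0 ≤ ρ.im → R ≤ ‖ρ‖ →
      ∀ x ∈ Set.Icc 0 bN,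
        ‖Y1 ρ x - exp (I * ρ * x)‖ ≤ C / ‖ρ‖ * ‖exp (I * ρ * x)‖ ∧
        ‖Y1' ρ x - I * ρ * exp (I * ρ * x)‖ ≤ C / ‖ρ‖ * ‖ρ * exp (I * ρ * x)‖ ∧
        ‖Y2 ρ x - exp (-(I * ρ * x))‖ ≤ C / ‖ρ‖ * ‖exp (-(I * ρ * x))‖ ∧
        ‖Y2' ρ x - (-(I * ρ)) * exp (-(I * ρ * x))‖ ≤ C / ‖ρ‖ * ‖ρ * exp (-(I * ρ * x))‖) :
    ∃ C R : ℝ, 0 < C ∧ 0 < R ∧ ∀ ρ : ℂ, 0 ≤ ρ.im → R ≤ ‖ρ‖ →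
      (∏ k ∈ Finset.range N,
          ((-Y1 ρ (a k)) * (-Y2' ρ (a k)) - (-Y1' ρ (a k)) * (-Y2 ρ (a k))))
        = (Y2' ρ 0 * Y1 ρ 0 - Y1' ρ 0 * Y2 ρ 0) ^ N ∧
      ‖(Y2' ρ 0 * Y1 ρ 0 - Y1' ρ 0 * Y2 ρ 0) ^ N - (-2 * I * ρ) ^ N‖
        ≤ C / ‖ρ‖ * ‖(-2 * I * ρ) ^ N‖ := by
  obtain ⟨C, R, hC, hR, hest⟩ := hasym
  obtain ⟨m, rfl⟩ : ∃ m, N = m + 1 := ⟨N - 1, (Nat.succ_pred_eq_of_pos hN).symm⟩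
  set C' : ℝ := 4 * C + 2 * C ^ 2 with hC'def
  have hC'pos : 0 < C' := by positivity
  refine ⟨(m + 1) * 4 ^ (m + 1) * C', max R (max 1 C'), by positivity, ?_, ?_⟩
  · exact lt_of_lt_of_le hR (le_max_left _ _)
  intro ρ him hρ
  have hrR : R ≤ ‖ρ‖ := le_trans (le_max_left _ _) hρ
  have h1r : 1 ≤ ‖ρ‖ := le_trans (le_trans (le_max_left _ _) (le_max_right R _)) hρ
  have hC'r : C' ≤ ‖ρ‖ := le_trans (le_trans (le_max_right 1 _) (le_max_right R _)) hρ
  have hr0 : (0:ℝ) < ‖ρ‖ := lt_of_lt_of_le one_pos h1r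
  -- Wronskian is constant
  have hW : ∀ x ∈ Set.Icc (0:ℝ) bN,
      Y1 ρ x * Y2' ρ x - Y1' ρ x * Y2 ρ x = Y1 ρ 0 * Y2' ρ 0 - Y1' ρ 0 * Y2 ρ 0 := by
    intro x hx
    have h0mem : (0:ℝ) ∈ Set.Icc (0:ℝ) bN := ⟨le_refl 0, hbN.le⟩
    have hderiv : ∀ y ∈ Set.Icc (0:ℝ) bN,
        HasDerivWithinAt (fun t => Y1 ρ t * Y2' ρ t - Y1' ρ t * Y2 ρ t) 0
          (Set.Icc (0:ℝ) bN) y := by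
      intro y hy
      obtain ⟨h1, h2, h3, h4⟩ := hode ρ him y hy
      have h := (h1.mul h4).sub (h2.mul h3)
      have heq : Y1' ρ y * Y2' ρ y + Y1 ρ y * ((q y - ρ ^ 2) * Y2 ρ y)
          - ((q y - ρ ^ 2) * Y1 ρ y * Y2 ρ y + Y1' ρ y * Y2' ρ y) = 0 := by ring
      rwa [heq] at h
    have key := (convex_Icc (0:ℝ) bN).norm_image_sub_le_of_norm_hasDerivWithin_le
      (C := 0) hderiv (fun y _ => by simp) h0mem hx
    have : ‖(Y1 ρ x * Y2' ρ x - Y1' ρ x * Y2 ρ x)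
        - (Y1 ρ 0 * Y2' ρ 0 - Y1' ρ 0 * Y2 ρ 0)‖ ≤ 0 := by
      simpa using key
    exact sub_eq_zero.mp (norm_le_zero_iff.mp this)
  constructor
  · -- product identity
    have : ∀ k ∈ Finset.range (m + 1),
        (-Y1 ρ (a k)) * (-Y2' ρ (a k)) - (-Y1' ρ (a k)) * (-Y2 ρ (a k))
          = Y2' ρ 0 * Y1 ρ 0 - Y1' ρ 0 * Y2 ρ 0 := by
      intro k hk
      have h := hW (a k) (ha k (Finset.mem_range.mp hk))
      linear_combination h
    rw [Finset.prod_congr rfl this, Finset.prod_const, Finset.card_range]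
  · -- asymptotic estimate
    have h0mem : (0:ℝ) ∈ Set.Icc (0:ℝ) bN := ⟨le_refl 0, hbN.le⟩
    obtain ⟨e1, f1, e2, f2⟩ := hest ρ him hrR 0 h0mem
    simp only [Complex.ofReal_zero, mul_zero, Complex.exp_zero, neg_zero, mul_one,
      norm_one] at e1 f1 e2 f2
    have hrne : ‖ρ‖ ≠ 0 := ne_of_gt hr0
    rw [div_mul_cancel₀ C hrne] at f1 f2
    have hCr : C / ‖ρ‖ ≤ C := by
      rw [div_le_iff₀ hr0]
      nlinarith
    have hY1n : ‖Y1 ρ 0‖ ≤ 1 + C := by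
      calc ‖Y1 ρ 0‖ = ‖(Y1 ρ 0 - 1) + 1‖ := by ring_nf
        _ ≤ ‖Y1 ρ 0 - 1‖ + ‖(1:ℂ)‖ := norm_add_le _ _
        _ ≤ C / ‖ρ‖ + 1 := by rw [norm_one]; gcongr
        _ ≤ 1 + C := by linarith
    have hY2n : ‖Y2 ρ 0‖ ≤ 1 + C := by
      calc ‖Y2 ρ 0‖ = ‖(Y2 ρ 0 - 1) + 1‖ := by ring_nf
        _ ≤ ‖Y2 ρ 0 - 1‖ + ‖(1:ℂ)‖ := norm_add_le _ _
        _ ≤ C / ‖ρ‖ + 1 := by rw [norm_one]; gcongr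
        _ ≤ 1 + C := by linarith
    set W0 : ℂ := Y2' ρ 0 * Y1 ρ 0 - Y1' ρ 0 * Y2 ρ 0 with hW0def
    set b : ℂ := -2 * I * ρ with hbdef
    have hIρ : ‖I * ρ‖ = ‖ρ‖ := by rw [norm_mul, Complex.norm_I, one_mul]
    have hkey : W0 - b = (Y2' ρ 0 - (-(I * ρ))) * Y1 ρ 0 + (-(I * ρ)) * (Y1 ρ 0 - 1)
        - ((Y1' ρ 0 - I * ρ) * Y2 ρ 0 + (I * ρ) * (Y2 ρ 0 - 1)) := by
      rw [hW0def, hbdef]; ring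
    have hWb : ‖W0 - b‖ ≤ C' := by
      rw [hkey]
      calc ‖(Y2' ρ 0 - (-(I * ρ))) * Y1 ρ 0 + (-(I * ρ)) * (Y1 ρ 0 - 1)
            - ((Y1' ρ 0 - I * ρ) * Y2 ρ 0 + (I * ρ) * (Y2 ρ 0 - 1))‖
          ≤ ‖(Y2' ρ 0 - (-(I * ρ))) * Y1 ρ 0 + (-(I * ρ)) * (Y1 ρ 0 - 1)‖
            + ‖(Y1' ρ 0 - I * ρ) * Y2 ρ 0 + (I * ρ) * (Y2 ρ 0 - 1)‖ := norm_sub_le _ _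
        _ ≤ (‖(Y2' ρ 0 - (-(I * ρ))) * Y1 ρ 0‖ + ‖(-(I * ρ)) * (Y1 ρ 0 - 1)‖)
            + (‖(Y1' ρ 0 - I * ρ) * Y2 ρ 0‖ + ‖(I * ρ) * (Y2 ρ 0 - 1)‖) := by
          gcongr <;> exact norm_add_le _ _
        _ ≤ (C * (1 + C) + ‖ρ‖ * (C / ‖ρ‖)) + (C * (1 + C) + ‖ρ‖ * (C / ‖ρ‖)) := by
          gcongr
          · rw [norm_mul]
            exact mul_le_mul f2 hY1n (norm_nonneg _) hC.le
          · rw [norm_mul, norm_neg, hIρ]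
            exact mul_le_mul_of_nonneg_left e1 hr0.le
          · rw [norm_mul]
            exact mul_le_mul f1 hY2n (norm_nonneg _) hC.le
          · rw [norm_mul, hIρ]
            exact mul_le_mul_of_nonneg_left e2 hr0.le
        _ = 2 * (C * (1 + C)) + 2 * C := by
          rw [mul_div_cancel₀ C hrne]; ring
        _ = C' := by rw [hC'def]; ring
    have hbn : ‖b‖ = 2 * ‖ρ‖ := by
      rw [hbdef, norm_mul, norm_mul, Complex.norm_I]
      norm_num
    have hW0n : ‖W0‖ ≤ 4 * ‖ρ‖ := by
      calc ‖W0‖ = ‖(W0 - b) + b‖ := by ring_nf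
        _ ≤ ‖W0 - b‖ + ‖b‖ := norm_add_le _ _
        _ ≤ C' + 2 * ‖ρ‖ := by rw [hbn]; gcongr
        _ ≤ ‖ρ‖ + 2 * ‖ρ‖ := by linarith
        _ ≤ 4 * ‖ρ‖ := by linarith
    have hbn' : ‖b‖ ≤ 4 * ‖ρ‖ := by rw [hbn]; linarith
    have hpow := aux_pow_sub_pow W0 b (4 * ‖ρ‖) hW0n hbn' m
    have hbpow : ‖b ^ (m + 1)‖ = (2 * ‖ρ‖) ^ (m + 1) := by rw [norm_pow, hbn]
    calc ‖W0 ^ (m + 1) - b ^ (m + 1)‖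
        ≤ (m + 1) * (4 * ‖ρ‖) ^ m * ‖W0 - b‖ := hpow
      _ ≤ (m + 1) * (4 * ‖ρ‖) ^ m * C' := by gcongr
      _ = ((m + 1) * C') * (4 ^ m * ‖ρ‖ ^ m) := by rw [mul_pow]; ring
      _ ≤ ((m + 1) * C') * ((4 ^ (m + 1) * 2 ^ (m + 1)) * ‖ρ‖ ^ m) := by
          have h4a : (4:ℝ) ^ m ≤ 4 ^ (m + 1) := by
            apply pow_le_pow_right₀ (by norm_num) (Nat.le_succ m)
          have h4b : (1:ℝ) ≤ 2 ^ (m + 1) := one_le_pow₀ (by norm_num)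
          have h4c : (0:ℝ) < 4 ^ (m + 1) := by positivity
          have h4 : (4:ℝ) ^ m ≤ 4 ^ (m + 1) * 2 ^ (m + 1) := by nlinarith
          gcongr
      _ = ((m + 1) * 4 ^ (m + 1) * C') * ((2 * ‖ρ‖) ^ (m + 1) / ‖ρ‖) := by
          have hc : (2 * ‖ρ‖) ^ (m + 1) / ‖ρ‖ = 2 ^ (m + 1) * ‖ρ‖ ^ m := by
            rw [mul_pow, div_eq_iff hrne, pow_succ]; ring
          rw [hc]; ring
      _ = ((m + 1) * 4 ^ (m + 1) * C') / ‖ρ‖ * ‖b ^ (m + 1)‖ := by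
          rw [hbpow, div_mul_eq_mul_div, mul_div_assoc]
end

section
/- If two time-scale Sturm–Liouville problems on T have equal potentials on T_{m,0} = ⋃_{k=1}^{m−1}[a_k, b_k] and equal Weyl functions M(λ) = M̃(λ), then Φ(x, λ) = Φ̃(x, λ) for all x ∈ T_{m,0}, and moreover Φ(a_m, λ) = Φ̃(a_m, λ) and Φ′(a_m, λ) = Φ̃′(a_m, λ), so the truncated Weyl functions coincide: M_m(λ) = M̃_m(λ). -/
lemma uniq_interval (A B : ℝ) (q : ℝ → ℂ) (lam : ℂ)
    (hq : ContinuousOn q (Set.Icc A B))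
    (y y' z z' : ℝ → ℂ)
    (hy : ∀ x ∈ Set.Icc A B, HasDerivWithinAt y (y' x) (Set.Icc A B) x ∧
      HasDerivWithinAt y' ((q x - lam) * y x) (Set.Icc A B) x)
    (hz : ∀ x ∈ Set.Icc A B, HasDerivWithinAt z (z' x) (Set.Icc A B) x ∧
      HasDerivWithinAt z' ((q x - lam) * z x) (Set.Icc A B) x)
    (h0 : y A = z A) (h0' : y' A = z' A) :
    ∀ x ∈ Set.Icc A B, y x = z x ∧ y' x = z' x := by
  obtain ⟨Kr, hKr⟩ : ∃ Kr, ∀ t ∈ Set.Icc A B, ‖q t - lam‖ ≤ Kr :=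
    isCompact_Icc.exists_bound_of_continuousOn (hq.sub continuousOn_const)
  set K : NNReal := Real.toNNReal (max 1 Kr) with hKdef
  have hK1 : (1 : ℝ) ≤ K := le_trans (le_max_left 1 Kr) (Real.le_coe_toNNReal _)
  have hKb : ∀ t ∈ Set.Icc A B, ‖q t - lam‖ ≤ K := fun t ht =>
    le_trans (le_trans (hKr t ht) (le_max_right 1 Kr)) (Real.le_coe_toNNReal _)
  set c : ℝ → ℂ := fun t => if t ∈ Set.Icc A B then q t - lam else 0 with hcdef
  have hcq : ∀ t ∈ Set.Icc A B, c t = q t - lam := fun t ht => by rw [hcdef]; exact if_pos ht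
  have hcb : ∀ t, ‖c t‖ ≤ (K : ℝ) := by
    intro t
    by_cases ht : t ∈ Set.Icc A B
    · rw [hcq t ht]; exact hKb t ht
    · rw [hcdef]; simp only; rw [if_neg ht, norm_zero]; exact le_trans zero_le_one hK1
  set v : ℝ → ℂ × ℂ → ℂ × ℂ := fun t p => (p.2, c t * p.1) with hvdef
  have hv : ∀ t, LipschitzOnWith K (v t) (Set.univ : Set (ℂ × ℂ)) := by
    intro t
    rw [lipschitzOnWith_univ]
    apply LipschitzWith.of_dist_le_mul
    intro p p'
    have h1 : dist p.2 p'.2 ≤ dist p p' := by rw [Prod.dist_eq]; exact le_max_right _ _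
    have h2 : dist p.1 p'.1 ≤ dist p p' := by rw [Prod.dist_eq]; exact le_max_left _ _
    rw [Prod.dist_eq]
    apply max_le
    · exact le_trans h1 (le_mul_of_one_le_left dist_nonneg hK1)
    · have hd : dist (c t * p.1) (c t * p'.1) = ‖c t‖ * dist p.1 p'.1 := by
        rw [dist_eq_norm, ← mul_sub, norm_mul, dist_eq_norm]
      rw [hd]
      exact mul_le_mul (hcb t) h2 dist_nonneg (le_trans zero_le_one hK1)
  have hconv : ∀ f : ℝ → ℂ × ℂ,
      (∀ x ∈ Set.Icc A B, HasDerivWithinAt f (v x (f x)) (Set.Icc A B) x) →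
      ∀ t ∈ Set.Ico A B, HasDerivWithinAt f (v t (f t)) (Set.Ici t) t := by
    intro f hf t ht
    have hmem : Set.Icc A B ∈ nhdsWithin t (Set.Ici t) := by
      rw [mem_nhdsWithin]
      exact ⟨Set.Iio B, isOpen_Iio, ht.2, fun u hu => ⟨ht.1.trans hu.2, hu.1.le⟩⟩
    exact (hf t ⟨ht.1, ht.2.le⟩).mono_of_mem_nhdsWithin hmem
  set f : ℝ → ℂ × ℂ := fun t => (y t, y' t) with hfdef
  set g : ℝ → ℂ × ℂ := fun t => (z t, z' t) with hgdef
  have hf' : ∀ x ∈ Set.Icc A B, HasDerivWithinAt f (v x (f x)) (Set.Icc A B) x := by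
    intro x hx
    have := HasDerivWithinAt.prodMk (hy x hx).1 (hy x hx).2
    simpa [hvdef, hcq x hx] using this
  have hg' : ∀ x ∈ Set.Icc A B, HasDerivWithinAt g (v x (g x)) (Set.Icc A B) x := by
    intro x hx
    have := HasDerivWithinAt.prodMk (hz x hx).1 (hz x hx).2
    simpa [hvdef, hcq x hx] using this
  have hfc : ContinuousOn f (Set.Icc A B) := fun x hx => (hf' x hx).continuousWithinAt
  have hgc : ContinuousOn g (Set.Icc A B) := fun x hx => (hg' x hx).continuousWithinAt
  have heq : Set.EqOn f g (Set.Icc A B) :=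
    ODE_solution_unique_of_mem_Icc_right (s := fun _ => (Set.univ : Set (ℂ × ℂ))) (fun t _ => hv t) hfc
      (hconv f hf') (fun _ _ => Set.mem_univ _)
      hgc (hconv g hg') (fun _ _ => Set.mem_univ _) (by simp [hfdef, hgdef, h0, h0'])
  intro x hx
  have := heq hx
  exact ⟨congrArg Prod.fst this, congrArg Prod.snd this⟩


/-- `(y, y')` solves the Sturm–Liouville system on `T = ⋃_{k<N} [a_k, b_k]` (`0`-indexed):
the equation `-y'' + q y = λ y` on each interval `[a_k, b_k]`, together with the jump conditions
`(y(a_{k+1}), y'(a_{k+1}))ᵀ = A_k(λ) (y(b_k), y'(b_k))ᵀ`, where `A_k(λ)` has entries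
`α₁₁ = 1`, `α₁₂ = a_{k+1} - b_k`, `α₂₁ = (a_{k+1} - b_k)(q(b_k) - λ)`,
`α₂₂ = 1 + (a_{k+1} - b_k)²(q(b_k) - λ)`. -/
def SLSol (N : ℕ) (a b : ℕ → ℝ) (q : ℝ → ℂ) (lam : ℂ) (y y' : ℝ → ℂ) : Prop :=
  (∀ k < N, ∀ x ∈ Set.Icc (a k) (b k),
      HasDerivWithinAt y (y' x) (Set.Icc (a k) (b k)) x ∧
      HasDerivWithinAt y' ((q x - lam) * y x) (Set.Icc (a k) (b k)) x) ∧
  (∀ k, k + 1 < N →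
      y (a (k + 1)) = y (b k) + ((a (k + 1) - b k : ℝ) : ℂ) * y' (b k) ∧
      y' (a (k + 1)) = ((a (k + 1) - b k : ℝ) : ℂ) * (q (b k) - lam) * y (b k)
        + (1 + ((a (k + 1) - b k : ℝ) : ℂ) ^ 2 * (q (b k) - lam)) * y' (b k))

/-- If two time-scale Sturm–Liouville problems have equal potentials on
`T_{m,0} = ⋃_{k<m} [a_k, b_k]` (`0`-indexed: the first `m` intervals) and equal Weyl functions
`M = M̃`, then the Weyl solutions `Φ = S + M·C` and `Φ̃ = S̃ + M̃·C̃` coincide on `T_{m,0}`,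
their values and derivatives at `a_m` coincide, and hence the truncated Weyl functions
`M_m = Φ(a_m,·)/Φ'(a_m,·)` and `M̃_m` coincide. -/
theorem stmt19 (N : ℕ) (hN : 2 ≤ N) (a b : ℕ → ℝ)
    (hab : ∀ k < N, a k < b k) (hba : ∀ k, k + 1 < N → b k < a (k + 1))
    (q qt : ℝ → ℂ)
    (hq : ContinuousOn q (⋃ k ∈ Finset.range N, Set.Icc (a k) (b k)))
    (hqt : ContinuousOn qt (⋃ k ∈ Finset.range N, Set.Icc (a k) (b k)))
    (S S' C C' St St' Ct Ct' : ℂ → ℝ → ℂ) (M Mt : ℂ → ℂ)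
    (hS : ∀ lam : ℂ, SLSol N a b q lam (S lam) (S' lam))
    (hC : ∀ lam : ℂ, SLSol N a b q lam (C lam) (C' lam))
    (hSt : ∀ lam : ℂ, SLSol N a b qt lam (St lam) (St' lam))
    (hCt : ∀ lam : ℂ, SLSol N a b qt lam (Ct lam) (Ct' lam))
    (hinit : ∀ lam : ℂ, S lam (a 0) = 0 ∧ S' lam (a 0) = 1 ∧
      C lam (a 0) = 1 ∧ C' lam (a 0) = 0)
    (hinitt : ∀ lam : ℂ, St lam (a 0) = 0 ∧ St' lam (a 0) = 1 ∧
      Ct lam (a 0) = 1 ∧ Ct' lam (a 0) = 0)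
    (hM : ∀ lam : ℂ, C lam (b (N - 1)) ≠ 0 →
      S lam (b (N - 1)) + M lam * C lam (b (N - 1)) = 0)
    (hMt : ∀ lam : ℂ, Ct lam (b (N - 1)) ≠ 0 →
      St lam (b (N - 1)) + Mt lam * Ct lam (b (N - 1)) = 0)
    (m : ℕ) (hm1 : 1 ≤ m) (hm2 : m ≤ N - 1)
    (hqeq : ∀ x ∈ ⋃ k ∈ Finset.range m, Set.Icc (a k) (b k), q x = qt x)
    (hMM : ∀ lam : ℂ, M lam = Mt lam) :
    ∀ lam : ℂ,
      (∀ x ∈ ⋃ k ∈ Finset.range m, Set.Icc (a k) (b k),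
        S lam x + M lam * C lam x = St lam x + Mt lam * Ct lam x) ∧
      S lam (a m) + M lam * C lam (a m) = St lam (a m) + Mt lam * Ct lam (a m) ∧
      S' lam (a m) + M lam * C' lam (a m) = St' lam (a m) + Mt lam * Ct' lam (a m) ∧
      (S lam (a m) + M lam * C lam (a m)) / (S' lam (a m) + M lam * C' lam (a m)) =
        (St lam (a m) + Mt lam * Ct lam (a m)) /
          (St' lam (a m) + Mt lam * Ct' lam (a m)) := by

  intro lam
  have hMl : M lam = Mt lam := hMM lam
  set P : ℕ → Prop := fun k =>
    S lam (a k) = St lam (a k) ∧ S' lam (a k) = St' lam (a k) ∧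
    C lam (a k) = Ct lam (a k) ∧ C' lam (a k) = Ct' lam (a k) with hPdef
  have hstep : ∀ k < m, P k →
      (∀ x ∈ Set.Icc (a k) (b k),
        S lam x = St lam x ∧ S' lam x = St' lam x ∧
        C lam x = Ct lam x ∧ C' lam x = Ct' lam x) ∧ P (k + 1) := by
    intro k hk hPk
    have hkN : k < N := by omega
    have hk1N : k + 1 < N := by omega
    have hsubm : Set.Icc (a k) (b k) ⊆ ⋃ j ∈ Finset.range m, Set.Icc (a j) (b j) :=
      fun x hx => Set.mem_iUnion₂.2 ⟨k, Finset.mem_range.2 hk, hx⟩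
    have hsubN : Set.Icc (a k) (b k) ⊆ ⋃ j ∈ Finset.range N, Set.Icc (a j) (b j) :=
      fun x hx => Set.mem_iUnion₂.2 ⟨k, Finset.mem_range.2 hkN, hx⟩
    have hqIcc : ContinuousOn q (Set.Icc (a k) (b k)) := hq.mono hsubN
    have hqeqk : ∀ x ∈ Set.Icc (a k) (b k), q x = qt x := fun x hx => hqeq x (hsubm hx)
    have hzS : ∀ x ∈ Set.Icc (a k) (b k),
        HasDerivWithinAt (St lam) (St' lam x) (Set.Icc (a k) (b k)) x ∧
        HasDerivWithinAt (St' lam) ((q x - lam) * St lam x) (Set.Icc (a k) (b k)) x := by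
      intro x hx
      refine ⟨((hSt lam).1 k hkN x hx).1, ?_⟩
      rw [hqeqk x hx]
      exact ((hSt lam).1 k hkN x hx).2
    have hzC : ∀ x ∈ Set.Icc (a k) (b k),
        HasDerivWithinAt (Ct lam) (Ct' lam x) (Set.Icc (a k) (b k)) x ∧
        HasDerivWithinAt (Ct' lam) ((q x - lam) * Ct lam x) (Set.Icc (a k) (b k)) x := by
      intro x hx
      refine ⟨((hCt lam).1 k hkN x hx).1, ?_⟩
      rw [hqeqk x hx]
      exact ((hCt lam).1 k hkN x hx).2
    have hSint := uniq_interval (a k) (b k) q lam hqIcc (S lam) (S' lam) (St lam) (St' lam)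
      ((hS lam).1 k hkN) hzS hPk.1 hPk.2.1
    have hCint := uniq_interval (a k) (b k) q lam hqIcc (C lam) (C' lam) (Ct lam) (Ct' lam)
      ((hC lam).1 k hkN) hzC hPk.2.2.1 hPk.2.2.2
    have hint : ∀ x ∈ Set.Icc (a k) (b k),
        S lam x = St lam x ∧ S' lam x = St' lam x ∧
        C lam x = Ct lam x ∧ C' lam x = Ct' lam x := fun x hx =>
      ⟨(hSint x hx).1, (hSint x hx).2, (hCint x hx).1, (hCint x hx).2⟩
    refine ⟨hint, ?_⟩
    have hb : b k ∈ Set.Icc (a k) (b k) := ⟨(hab k hkN).le, le_refl _⟩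
    have hqb : q (b k) = qt (b k) := hqeqk (b k) hb
    have hbe := hint (b k) hb
    refine ⟨?_, ?_, ?_, ?_⟩
    · rw [((hS lam).2 k hk1N).1, ((hSt lam).2 k hk1N).1, hbe.1, hbe.2.1]
    · rw [((hS lam).2 k hk1N).2, ((hSt lam).2 k hk1N).2, hbe.1, hbe.2.1, hqb]
    · rw [((hC lam).2 k hk1N).1, ((hCt lam).2 k hk1N).1, hbe.2.2.1, hbe.2.2.2]
    · rw [((hC lam).2 k hk1N).2, ((hCt lam).2 k hk1N).2, hbe.2.2.1, hbe.2.2.2, hqb]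
  have hP : ∀ k ≤ m, P k := by
    intro k
    induction k with
    | zero =>
      intro _
      obtain ⟨h1, h2, h3, h4⟩ := hinit lam
      obtain ⟨h1t, h2t, h3t, h4t⟩ := hinitt lam
      exact ⟨h1.trans h1t.symm, h2.trans h2t.symm, h3.trans h3t.symm, h4.trans h4t.symm⟩
    | succ k ih =>
      intro hk1
      exact (hstep k (by omega) (ih (by omega))).2
  have Pm := hP m le_rfl
  have hA : S lam (a m) + M lam * C lam (a m) = St lam (a m) + Mt lam * Ct lam (a m) := by
    rw [Pm.1, Pm.2.2.1, hMl]
  have hB : S' lam (a m) + M lam * C' lam (a m) = St' lam (a m) + Mt lam * Ct' lam (a m) := by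
    rw [Pm.2.1, Pm.2.2.2, hMl]
  refine ⟨?_, hA, hB, by rw [hA, hB]⟩
  intro x hx
  obtain ⟨k, hk, hxk⟩ := Set.mem_iUnion₂.1 hx
  have hkm : k < m := Finset.mem_range.1 hk
  have hint := (hstep k hkm (hP k hkm.le)).1 x hxk
  rw [hint.1, hint.2.2.1, hMl]
end
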